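/- For every k ≥ 3 and every real x ≥ 1, the functions defined by f₃(x) = √(x/2) + (x/2)^(1/4) + 1/2 and fₖ(x) = √(2x·f_{k-1}(x) + 1/4) + 1/2 for k ≥ 4 satisfy fₖ(x) ≤ 2^(1 - 3/2^(k-2)) · x^(1 - 1/2^(k-2)) + 2·x^(1 - 3/2^(k-1)). -/
import Mathlib

noncomputable def f : ℕ → ℝ → ℝ
  | k + 4, x => Real.sqrt (2 * x * f (k + 3) x + 1 / 4) + 1 / 2
  | _, x => Real.sqrt (x / 2) + (x / 2) ^ ((1 : ℝ) / 4) + 1 / 2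

theorem stmt_16 (k : ℕ) (hk : 3 ≤ k) (x : ℝ) (hx : 1 ≤ x) :
    f k x ≤ (2 : ℝ) ^ ((1 : ℝ) - 3 / (2 : ℝ) ^ (k - 2)) *
        x ^ ((1 : ℝ) - 1 / (2 : ℝ) ^ (k - 2)) +
      2 * x ^ ((1 : ℝ) - 3 / (2 : ℝ) ^ (k - 1)) := by
  have hx0 : (0:ℝ) < x := by linarith
  induction k, hk using Nat.le_induction with
  | base =>
    simp only [f]
    norm_num
    have h1 : Real.sqrt x / Real.sqrt 2 = 2 ^ (-((1:ℝ)/2)) * x ^ ((1:ℝ)/2) := by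
      rw [Real.sqrt_eq_rpow, Real.sqrt_eq_rpow, Real.rpow_neg (by norm_num : (0:ℝ) ≤ 2),
        div_eq_mul_inv]
      ring
    have h2 : (x/2) ^ ((1:ℝ)/4) ≤ x ^ ((1:ℝ)/4) := by
      apply Real.rpow_le_rpow (by linarith) (by linarith) (by norm_num)
    have h3 : (1:ℝ) ≤ x ^ ((1:ℝ)/4) := by
      calc (1:ℝ) = 1 ^ ((1:ℝ)/4) := by norm_num
        _ ≤ x ^ ((1:ℝ)/4) := Real.rpow_le_rpow (by norm_num) hx (by norm_num)
    rw [h1]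
    linarith
  | succ m hm ih =>
    have ih := ih
    obtain ⟨n, rfl⟩ : ∃ n, m = n + 3 := ⟨m - 3, by omega⟩
    simp only [show n+3+1-2 = n+2 from by omega, show n+3+1-1 = n+3 from by omega]
    simp only [show n+3-2 = n+1 from by omega, show n+3-1 = n+2 from by omega] at ih
    set A := (2:ℝ) ^ ((1:ℝ) - 3 / 2^(n+1)) * x ^ ((1:ℝ) - 1 / 2^(n+1)) with hA
    set B := 2 * x ^ ((1:ℝ) - 3 / 2^(n+2)) with hB
    set A' := (2:ℝ) ^ ((1:ℝ) - 3 / 2^(n+2)) * x ^ ((1:ℝ) - 1 / 2^(n+2)) with hA'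
    set B' := 2 * x ^ ((1:ℝ) - 3 / 2^(n+3)) with hB'
    have hpm : (1:ℝ) ≤ 2^n := one_le_pow₀ (by norm_num)
    have hp1 : (2:ℝ)^(n+1) = 2*2^n := by ring
    have hp2 : (2:ℝ)^(n+2) = 4*2^n := by ring
    have hp3 : (2:ℝ)^(n+3) = 8*2^n := by ring
    have hpne : (2:ℝ)^n ≠ 0 := by positivity
    have e2 : ((1:ℝ) - 3/2^(n+2)) + ((1:ℝ) - 3/2^(n+2)) = 1 + ((1:ℝ) - 3/2^(n+1)) := by
      rw [hp1, hp2]; field_simp; ring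
    have e2x : ((1:ℝ) - 1/2^(n+2)) + ((1:ℝ) - 1/2^(n+2)) = 1 + ((1:ℝ) - 1/2^(n+1)) := by
      rw [hp1, hp2]; field_simp; ring
    have e3 : ((1:ℝ) - 3/2^(n+3)) + ((1:ℝ) - 3/2^(n+3)) = 1 + ((1:ℝ) - 3/2^(n+2)) := by
      rw [hp2, hp3]; field_simp; ring
    have hA'sq : A'^2 = 2*x*A := by
      rw [hA', hA, sq, mul_mul_mul_comm, ← Real.rpow_add two_pos, ← Real.rpow_add hx0,
        e2, e2x, Real.rpow_add two_pos, Real.rpow_add hx0, Real.rpow_one, Real.rpow_one]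
      ring
    have hB'sq : B'^2 = 2*x*B := by
      rw [hB', hB, mul_pow, sq (x ^ _), ← Real.rpow_add hx0, e3, Real.rpow_add hx0, Real.rpow_one]
      ring
    have hA'1 : (1:ℝ) ≤ A' := by
      rw [hA']
      have ha : (1:ℝ) ≤ 2 ^ ((1:ℝ) - 3 / 2^(n+2)) := by
        calc (1:ℝ) = (2:ℝ) ^ (0:ℝ) := by rw [Real.rpow_zero]
          _ ≤ _ := Real.rpow_le_rpow_of_exponent_le (by norm_num) (by rw [hp2]; rw [sub_nonneg, div_le_one (by positivity)]; linarith)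
      have hb : (1:ℝ) ≤ x ^ ((1:ℝ) - 1 / 2^(n+2)) := by
        calc (1:ℝ) = x ^ (0:ℝ) := by rw [Real.rpow_zero]
          _ ≤ _ := Real.rpow_le_rpow_of_exponent_le hx (by rw [hp2]; rw [sub_nonneg, div_le_one (by positivity)]; linarith)
      nlinarith
    have hB'1 : (2:ℝ) ≤ B' := by
      rw [hB']
      have hb : (1:ℝ) ≤ x ^ ((1:ℝ) - 3 / 2^(n+3)) := by
        calc (1:ℝ) = x ^ (0:ℝ) := by rw [Real.rpow_zero]
          _ ≤ _ := Real.rpow_le_rpow_of_exponent_le hx (by rw [hp3]; rw [sub_nonneg, div_le_one (by positivity)]; linarith)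
      linarith
    have hle : 2*x*f (n+3) x + 1/4 ≤ (A' + B' - 1/2)^2 := by
      have h1 : 2*x*f (n+3) x ≤ 2*x*(A+B) := by
        apply mul_le_mul_of_nonneg_left ih (by linarith)
      nlinarith [mul_le_mul hA'1 hB'1 (by norm_num) (by linarith : (0:ℝ) ≤ A')]
    have hs : Real.sqrt (2*x*f (n+3) x + 1/4) ≤ A' + B' - 1/2 := by
      have h0 : (0:ℝ) ≤ A' + B' - 1/2 := by linarith
      calc Real.sqrt (2*x*f (n+3) x + 1/4) ≤ Real.sqrt ((A'+B'-1/2)^2) := Real.sqrt_le_sqrt hle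
        _ = A' + B' - 1/2 := Real.sqrt_sq h0
    show Real.sqrt (2*x*f (n+3) x + 1/4) + 1/2 ≤ A' + B'
    linarith
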